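/- Let n be a positive natural number and let S be a nonempty finite index set. Let h : S → EuclideanSpace ℂ (Fin n) be channel vectors with ‖h i‖ = 1 for all i ∈ S. Define the pairwise angles α_{i,j} = arccos ‖⟪h i, h j⟫‖ and let α = max_{i,j ∈ S} α_{i,j} be the maximum angle between any two channel vectors. Suppose m* with ‖m*‖ = 1 attains the maximum of min_{i ∈ S} ‖⟪m, h i⟫‖² over all m with ‖m‖ = 1, and define θ_i = arccos ‖⟪m*, h i⟫‖. Then for every i ∈ S, 0 ≤ θ_i ≤ α. -/
import Mathlib


open scoped ComplexInnerProductSpace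

/-- For unit-norm channel vectors `h i`, if `m*` maximizes the minimum squared
projection `‖⟪m, h i⟫‖²` over unit-norm `m`, then each angle
`θ_i = arccos ‖⟪m*, h i⟫‖` satisfies `0 ≤ θ_i ≤ α`, where
`α = max_{i,j} arccos ‖⟪h i, h j⟫‖` is the maximum pairwise channel angle. -/
theorem stmt1 (n : ℕ) (hn : 0 < n) (S : Type*) [Fintype S] [Nonempty S]
    (h : S → EuclideanSpace ℂ (Fin n)) (hunit : ∀ i : S, ‖h i‖ = 1)
    (mstar : EuclideanSpace ℂ (Fin n)) (hmstar : ‖mstar‖ = 1)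
    (hopt : ∀ m : EuclideanSpace ℂ (Fin n), ‖m‖ = 1 →
      (⨅ i : S, ‖⟪m, h i⟫‖ ^ 2) ≤ ⨅ i : S, ‖⟪mstar, h i⟫‖ ^ 2) :
    ∀ i : S,
      0 ≤ Real.arccos ‖⟪mstar, h i⟫‖ ∧
      Real.arccos ‖⟪mstar, h i⟫‖ ≤
        ⨆ i : S, ⨆ j : S, Real.arccos ‖⟪h i, h j⟫‖ := by
  intro i
  refine ⟨Real.arccos_nonneg _, ?_⟩
  obtain ⟨i₀⟩ := (inferInstance : Nonempty S)
  obtain ⟨j, hj⟩ := Finite.exists_min (fun k : S => ‖⟪h i₀, h k⟫‖ ^ 2)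
  have hbdd : BddBelow (Set.range fun k : S => ‖⟪mstar, h k⟫‖ ^ 2) :=
    (Set.finite_range _).bddBelow
  have h1 : ‖⟪h i₀, h j⟫‖ ^ 2 ≤ ‖⟪mstar, h i⟫‖ ^ 2 := by
    calc ‖⟪h i₀, h j⟫‖ ^ 2 ≤ ⨅ k : S, ‖⟪h i₀, h k⟫‖ ^ 2 := le_ciInf hj
      _ ≤ ⨅ k : S, ‖⟪mstar, h k⟫‖ ^ 2 := hopt _ (hunit i₀)
      _ ≤ ‖⟪mstar, h i⟫‖ ^ 2 := ciInf_le hbdd i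
  have h2 : ‖⟪h i₀, h j⟫‖ ≤ ‖⟪mstar, h i⟫‖ := by
    have := Real.sqrt_le_sqrt h1
    simpa [Real.sqrt_sq (norm_nonneg _)] using this
  have h3 : Real.arccos ‖⟪mstar, h i⟫‖ ≤ Real.arccos ‖⟪h i₀, h j⟫‖ :=
    by
    unfold Real.arccos
    have := Real.monotone_arcsin h2
    linarith
  refine h3.trans ?_
  have hA : BddAbove (Set.range fun a : S => ⨆ b : S, Real.arccos ‖⟪h a, h b⟫‖) :=
    (Set.finite_range _).bddAbove
  have hB : BddAbove (Set.range fun b : S => Real.arccos ‖⟪h i₀, h b⟫‖) :=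
    (Set.finite_range _).bddAbove
  exact le_trans (le_ciSup hB j) (le_ciSup hA i₀)
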